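/- Let n = m and f: ℝⁿ → ℝⁿ be measurable such that ap-limsup_{y→x} |f(y)-f(x)|/|y-x| < ∞ for all x outside a countable set N₀. Then f is approximately differentiable (of order 1) Lⁿ-almost everywhere, and the image under f of its approximate critical set C_f = {x : F₁(x) defined and det F₁(x) = 0} has Lebesgue measure zero. -/

import Mathlib

open MeasureTheory Metric Filter Set

noncomputable section

/-- `ℝⁿ` as a Euclidean space. -/
abbrev Ec (n : ℕ) := EuclideanSpace ℝ (Fin n)

/-- The set `A` has vanishing Lebesgue density at `x`. -/
def apSmall {n : ℕ} (x : Ec n) (A : Set (Ec n)) : Prop :=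
  Tendsto (fun r : ℝ => volume (A ∩ ball x r) / volume (ball x r))
    (nhdsWithin 0 (Ioi 0)) (nhds 0)

/-- `f` is approximately differentiable of order `k` at `x`, with Taylor polynomial
`y ↦ ∑_{j ≤ k} (p j) (y-x)^j = p.partialSum (k+1) (y-x)` (here the coefficient maps `p j`
already incorporate the factor `1/j!`): the approximate limit of
`|f y - p_k(x;y)|/|y-x|^k` as `y → x` is `0`. -/
def IsApproxTaylor {n m : ℕ} (f : Ec n → Ec m) (k : ℕ) (x : Ec n)
    (p : FormalMultilinearSeries ℝ (Ec n) (Ec m)) : Prop :=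
  ∀ ε > (0 : ℝ),
    apSmall x {y | y ≠ x ∧ ε * ‖y - x‖ ^ k ≤ ‖f y - p.partialSum (k + 1) (y - x)‖}
/-- `f` is approximately differentiable (of order 1) at `x` with approximate derivative `L`. -/
def ApproxDiff1 {n m : ℕ} (f : Ec n → Ec m) (x : Ec n) (L : Ec n →L[ℝ] Ec m) : Prop :=
  ∀ ε > (0 : ℝ), apSmall x {y | y ≠ x ∧ ε * ‖y - x‖ ≤ ‖f y - f x - L (y - x)‖}

open scoped ENNReal NNReal

namespace MS

variable {n : ℕ}

/-- The bad set of `x` at scale `k`: points where the difference quotient exceeds `k+1`. -/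
def bad (f : Ec n → Ec n) (k : ℕ) (x : Ec n) : Set (Ec n) :=
  {y | ((k : ℝ) + 1) * ‖y - x‖ < ‖f y - f x‖}

def eps (n : ℕ) : ℝ≥0∞ := ((3 : ℝ≥0∞) / 4) ^ n / 3

lemma h34_ne_top : (3 : ℝ≥0∞) / 4 ≠ ∞ := (ENNReal.div_lt_top (by norm_num) (by norm_num)).ne

lemma h34_ne_zero : (3 : ℝ≥0∞) / 4 ≠ 0 := by
  simp [ENNReal.div_eq_zero_iff]

lemma eps_pos : 0 < eps n :=
  ENNReal.div_pos (pow_ne_zero n h34_ne_zero) (by norm_num)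

lemma eps_ne_top : eps n ≠ ∞ :=
  (ENNReal.div_lt_top (ENNReal.pow_ne_top h34_ne_top) (by norm_num)).ne

/-- The set of points where all bad sets at scales below `1/(k+1)` have small relative measure. -/
def Ek (f : Ec n → Ec n) (k : ℕ) : Set (Ec n) :=
  {x | ∀ q : ℚ, 0 < (q : ℝ) → (q : ℝ) < 1 / ((k : ℝ) + 1) →
    volume (bad f k x ∩ ball x (q : ℝ)) ≤ eps n * volume (ball (0 : Ec n) (q : ℝ))}

lemma measurable_bad_vol (f : Ec n → Ec n) (hf : Measurable f) (k : ℕ) (q : ℝ) :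
    Measurable fun x => volume (bad f k x ∩ ball x q) := by
  have hA : MeasurableSet {p : Ec n × Ec n |
      (((k : ℝ) + 1) * ‖p.2 - p.1‖ < ‖f p.2 - f p.1‖) ∧ dist p.2 p.1 < q} := by
    apply MeasurableSet.inter
    · exact measurableSet_lt
        (((measurable_snd.sub measurable_fst).norm).const_mul _)
        (((hf.comp measurable_snd).sub (hf.comp measurable_fst)).norm)
    · exact measurableSet_lt (measurable_snd.dist measurable_fst) measurable_const
  have key := measurable_measure_prodMk_left (ν := (volume : Measure (Ec n))) hA
  have heq : ∀ x : Ec n, Prod.mk x ⁻¹' {p : Ec n × Ec n |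
      (((k : ℝ) + 1) * ‖p.2 - p.1‖ < ‖f p.2 - f p.1‖) ∧ dist p.2 p.1 < q}
      = bad f k x ∩ ball x q := by
    intro x; ext y; simp [bad, Set.mem_setOf_eq, mem_ball]
  simpa only [heq] using key

lemma measurableSet_Ek (f : Ec n → Ec n) (hf : Measurable f) (k : ℕ) :
    MeasurableSet (Ek f k) := by
  have : Ek f k = ⋂ q : ℚ, {x | 0 < (q : ℝ) → (q : ℝ) < 1 / ((k : ℝ) + 1) →
      volume (bad f k x ∩ ball x (q : ℝ)) ≤ eps n * volume (ball (0 : Ec n) (q : ℝ))} := by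
    ext x; simp [Ek]
  rw [this]
  apply MeasurableSet.iInter
  intro q
  by_cases h1 : 0 < (q : ℝ)
  · by_cases h2 : (q : ℝ) < 1 / ((k : ℝ) + 1)
    · simp only [h1, h2, forall_true_left]
      exact (measurable_bad_vol f hf k q) measurableSet_Iic
    · simp only [h2]; simp
  · simp only [h1]; simp

lemma coverage (f : Ec n → Ec n) {x : Ec n} {lam : ℝ}
    (hx : apSmall x {y | y ≠ x ∧ lam * ‖y - x‖ ≤ ‖f y - f x‖}) :
    ∃ k : ℕ, x ∈ Ek f k := by
  set S := {y | y ≠ x ∧ lam * ‖y - x‖ ≤ ‖f y - f x‖} with hS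
  have hev : ∀ᶠ r : ℝ in nhdsWithin 0 (Ioi 0),
      volume (S ∩ ball x r) / volume (ball x r) < eps n :=
    hx.eventually (gt_mem_nhds eps_pos)
  rw [eventually_nhdsWithin_iff] at hev
  rcases Metric.eventually_nhds_iff.1 hev with ⟨r₀, hr₀, hball⟩
  obtain ⟨k, hk⟩ := exists_nat_gt (max lam (1 / r₀))
  refine ⟨k, fun q hq1 hq2 => ?_⟩
  have hklam : lam ≤ (k : ℝ) + 1 := ((le_max_left _ _).trans hk.le).trans (by linarith)
  have hqr₀ : (q : ℝ) < r₀ := by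
    have h1 : 1 / r₀ < (k : ℝ) + 1 := ((le_max_right _ _).trans hk.le).trans_lt (by linarith)
    have : 1 / ((k : ℝ) + 1) < r₀ := by
      rw [div_lt_iff₀ (by positivity)]
      rw [div_lt_iff₀ hr₀] at h1
      linarith [mul_comm r₀ ((k:ℝ)+1)]
    linarith
  have hsub : bad f k x ⊆ S := by
    intro y hy
    have hy' : ((k : ℝ) + 1) * ‖y - x‖ < ‖f y - f x‖ := hy
    have hyx : y ≠ x := by
      rintro rfl
      simp at hy'
    exact ⟨hyx, le_trans (by
      have : (0:ℝ) ≤ ‖y - x‖ := norm_nonneg _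
      nlinarith) hy'.le⟩
  have hratio : volume (S ∩ ball x (q:ℝ)) / volume (ball x (q:ℝ)) < eps n :=
    hball (by rw [Real.dist_eq, sub_zero, abs_of_pos hq1]; exact hqr₀) hq1
  have h0 : volume (ball x (q:ℝ)) ≠ 0 := (measure_ball_pos volume x hq1).ne'
  have htop : volume (ball x (q:ℝ)) ≠ ∞ := measure_ball_lt_top.ne
  have : volume (S ∩ ball x (q:ℝ)) ≤ eps n * volume (ball x (q:ℝ)) :=
    (ENNReal.div_le_iff h0 htop).1 hratio.le
  have hfin : volume (bad f k x ∩ ball x (q:ℝ)) ≤ eps n * volume (ball x (q:ℝ)) :=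
    le_trans (measure_mono (inter_subset_inter_left _ hsub)) this
  rwa [Measure.addHaar_ball_center volume x] at hfin

lemma thirtyfour : ((3 : ℝ≥0∞) / 4) = ENNReal.ofReal (3/4) := by
  rw [ENNReal.ofReal_div_of_pos (by norm_num)]
  norm_num

lemma lipschitz_Ek (f : Ec n → Ec n) (k : ℕ) {x z : Ec n}
    (hx : x ∈ Ek f k) (hz : z ∈ Ek f k) (hd : dist x z < 1 / (2 * ((k : ℝ) + 1))) :
    ‖f x - f z‖ ≤ 5 * ((k : ℝ) + 1) * dist x z := by
  rcases eq_or_ne x z with rfl | hxz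
  · simp
  set ρ := dist x z with hρdef
  have hρ : 0 < ρ := dist_pos.2 hxz
  have hk1 : (0:ℝ) < (k : ℝ) + 1 := by positivity
  have h2ρ : 2 * ρ < 1 / ((k : ℝ) + 1) := by
    rw [lt_div_iff₀ (by positivity)] at hd
    rw [lt_div_iff₀ hk1]
    nlinarith
  obtain ⟨q, hq1, hq2⟩ := exists_rat_btwn (show 2 * ρ < min (1 / ((k:ℝ)+1)) (5 * ρ / 2) by
    rw [lt_min_iff]; exact ⟨h2ρ, by linarith⟩)
  have hq2a : (q : ℝ) < 1 / ((k:ℝ)+1) := hq2.trans_le (min_le_left _ _)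
  have hq2b : (q : ℝ) < 5 * ρ / 2 := hq2.trans_le (min_le_right _ _)
  have hq0 : 0 < (q : ℝ) := by linarith
  have Hx := hx q hq0 hq2a
  have Hz := hz q hq0 hq2a
  set B := volume (ball (0 : Ec n) (q : ℝ)) with hBdef
  have hB0 : B ≠ 0 := (measure_ball_pos volume _ hq0).ne'
  have hBtop : B ≠ ∞ := measure_ball_lt_top.ne
  set m := midpoint ℝ x z with hm
  have hdm1 : dist m x = ρ / 2 := by
    rw [hm, dist_midpoint_left]
    norm_num [hρdef]
    ring
  have hdm2 : dist m z = ρ / 2 := by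
    rw [hm, dist_midpoint_right]
    norm_num [hρdef]
    ring
  set W := ball x (q : ℝ) ∩ ball z (q : ℝ) with hW
  have hsubW : ball m ((q : ℝ) - ρ / 2) ⊆ W := by
    intro y hy
    rw [mem_ball] at hy
    constructor
    · rw [mem_ball]
      calc dist y x ≤ dist y m + dist m x := dist_triangle _ _ _
        _ < ((q : ℝ) - ρ/2) + ρ/2 := by rw [hdm1]; linarith
        _ = q := by ring
    · rw [mem_ball]
      calc dist y z ≤ dist y m + dist m z := dist_triangle _ _ _
        _ < ((q : ℝ) - ρ/2) + ρ/2 := by rw [hdm2]; linarith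
        _ = q := by ring
  have hfr : Module.finrank ℝ (Ec n) = n := finrank_euclideanSpace_fin
  have hWlb : ((3 : ℝ≥0∞)/4)^n * B ≤ volume W := by
    refine le_trans ?_ (measure_mono hsubW)
    have h1 : volume (ball m ((q:ℝ) - ρ/2))
        = ENNReal.ofReal (((q:ℝ) - ρ/2) ^ n) * volume (ball (0 : Ec n) 1) := by
      rw [Measure.addHaar_ball_of_pos volume m (by linarith), hfr]
    have h2 : B = ENNReal.ofReal ((q:ℝ) ^ n) * volume (ball (0 : Ec n) 1) := by
      rw [hBdef, Measure.addHaar_ball_of_pos volume _ hq0, hfr]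
    rw [h1, h2, ← mul_assoc, thirtyfour, ← ENNReal.ofReal_pow (by norm_num),
      ← ENNReal.ofReal_mul (by positivity)]
    refine mul_le_mul_left (ENNReal.ofReal_le_ofReal ?_) _
    rw [← mul_pow]
    exact pow_le_pow_left₀ (by positivity) (by linarith) n
  have hbound : volume ((bad f k x ∪ bad f k z) ∩ W)
      ≤ (2/3 : ℝ≥0∞) * (((3:ℝ≥0∞)/4)^n * B) := by
    calc volume ((bad f k x ∪ bad f k z) ∩ W)
        ≤ volume (bad f k x ∩ ball x (q:ℝ)) + volume (bad f k z ∩ ball z (q:ℝ)) := by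
          rw [union_inter_distrib_right]
          refine le_trans (measure_union_le _ _)
            (add_le_add (measure_mono (inter_subset_inter_right _ ?_))
              (measure_mono (inter_subset_inter_right _ ?_)))
          · exact fun y hy => hy.1
          · exact fun y hy => hy.2
      _ ≤ eps n * B + eps n * B := add_le_add Hx Hz
      _ = (2/3 : ℝ≥0∞) * (((3:ℝ≥0∞)/4)^n * B) := by
          simp only [eps, div_eq_mul_inv]
          ring
  have hlt : (2/3 : ℝ≥0∞) * (((3:ℝ≥0∞)/4)^n * B) < ((3:ℝ≥0∞)/4)^n * B := by
    have hc0 : ((3:ℝ≥0∞)/4)^n * B ≠ 0 := mul_ne_zero (pow_ne_zero _ h34_ne_zero) hB0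
    have hctop : ((3:ℝ≥0∞)/4)^n * B ≠ ∞ :=
      ENNReal.mul_ne_top (ENNReal.pow_ne_top h34_ne_top) hBtop
    conv_rhs => rw [← one_mul (((3:ℝ≥0∞)/4)^n * B)]
    rw [mul_comm ((2:ℝ≥0∞)/3) _, mul_comm (1:ℝ≥0∞) _]
    refine (ENNReal.mul_lt_mul_iff_right hc0 hctop).2 ?_
    rw [ENNReal.div_lt_iff (Or.inl (by norm_num)) (Or.inl (by norm_num))]
    norm_num
  have hne : (W \ (bad f k x ∪ bad f k z)).Nonempty := by
    rw [nonempty_iff_ne_empty]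
    intro hempty
    have hWsub : W ⊆ bad f k x ∪ bad f k z := by
      rwa [diff_eq_empty] at hempty
    have hmono : volume W ≤ volume ((bad f k x ∪ bad f k z) ∩ W) :=
      measure_mono (subset_inter hWsub Subset.rfl)
    exact absurd (lt_of_le_of_lt (hWlb.trans (hmono.trans hbound)) hlt) (lt_irrefl _)
  obtain ⟨y, hyW, hybad⟩ := hne
  have h1 : ‖f y - f x‖ ≤ ((k:ℝ)+1) * ‖y - x‖ :=
    not_lt.1 fun hc => hybad (Or.inl hc)
  have h2 : ‖f y - f z‖ ≤ ((k:ℝ)+1) * ‖y - z‖ :=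
    not_lt.1 fun hc => hybad (Or.inr hc)
  have hyx : ‖y - x‖ < (q:ℝ) := by rw [← dist_eq_norm]; exact mem_ball.1 hyW.1
  have hyz : ‖y - z‖ < (q:ℝ) := by rw [← dist_eq_norm]; exact mem_ball.1 hyW.2
  have tri : ‖f x - f z‖ ≤ ‖f y - f x‖ + ‖f y - f z‖ := by
    have := dist_triangle (f x) (f y) (f z)
    rw [dist_eq_norm, dist_eq_norm, dist_eq_norm] at this
    rw [norm_sub_rev (f x) (f y)] at this
    exact this
  have hb1 : ‖f y - f x‖ ≤ ((k:ℝ)+1) * (q:ℝ) :=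
    h1.trans (by nlinarith [norm_nonneg (y - x)])
  have hb2 : ‖f y - f z‖ ≤ ((k:ℝ)+1) * (q:ℝ) :=
    h2.trans (by nlinarith [norm_nonneg (y - z)])
  calc ‖f x - f z‖ ≤ ((k:ℝ)+1) * (q:ℝ) + ((k:ℝ)+1) * (q:ℝ) :=
        tri.trans (add_le_add hb1 hb2)
    _ ≤ 5 * ((k:ℝ)+1) * ρ := by nlinarith

lemma density_compl [Nontrivial (Ec n)] {S : Set (Ec n)} (hS : MeasurableSet S) {x : Ec n}
    (hx : Tendsto (fun r => volume (S ∩ closedBall x r) / volume (closedBall x r))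
      (nhdsWithin 0 (Ioi 0)) (nhds 1)) :
    Tendsto (fun r : ℝ => volume (Sᶜ ∩ ball x r) / volume (ball x r))
      (nhdsWithin 0 (Ioi 0)) (nhds 0) := by
  have key : Tendsto (fun r : ℝ => volume (closedBall x r \ S) / volume (closedBall x r))
      (nhdsWithin 0 (Ioi 0)) (nhds 0) := by
    rw [ENNReal.tendsto_nhds_zero]
    intro ε hε
    rcases le_or_gt 1 ε with hε1 | hε1
    · filter_upwards [self_mem_nhdsWithin] with r _
      refine le_trans ?_ hε1
      refine ENNReal.div_le_of_le_mul ?_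
      rw [one_mul]
      exact measure_mono diff_subset
    · have h1ε : (1 : ℝ≥0∞) - ε < 1 :=
        ENNReal.sub_lt_self ENNReal.one_ne_top one_ne_zero hε.ne'
      filter_upwards [hx.eventually (lt_mem_nhds h1ε), self_mem_nhdsWithin] with r hr hrpos
      have hr0 : (0:ℝ) < r := hrpos
      have hcb0 : volume (closedBall x r) ≠ 0 :=
        (measure_closedBall_pos volume x hr0).ne'
      have hcbtop : volume (closedBall x r) ≠ ∞ := measure_closedBall_lt_top.ne
      have hlow : (1 - ε) * volume (closedBall x r) < volume (S ∩ closedBall x r) := by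
        rw [← ENNReal.lt_div_iff_mul_lt (Or.inl hcb0) (Or.inl hcbtop)]
        exact hr
      by_contra hcon
      push_neg at hcon
      have hsum : volume (S ∩ closedBall x r) + volume (closedBall x r \ S)
          = volume (closedBall x r) := by
        rw [Set.inter_comm]
        exact measure_inter_add_diff _ hS
      have hsum2 : (1 - ε) * volume (closedBall x r) + ε * volume (closedBall x r)
          = volume (closedBall x r) := by
        rw [← add_mul, tsub_add_cancel_of_le hε1.le, one_mul]
      have hcon2 : ε * volume (closedBall x r) < volume (closedBall x r \ S) := by
        rw [← ENNReal.lt_div_iff_mul_lt (Or.inl hcb0) (Or.inl hcbtop)]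
        exact hcon
      have := ENNReal.add_lt_add hlow hcon2
      rw [hsum, hsum2] at this
      exact lt_irrefl _ this
  refine tendsto_of_tendsto_of_tendsto_of_le_of_le' tendsto_const_nhds key ?_ ?_
  · filter_upwards [self_mem_nhdsWithin] with r _; exact zero_le'
  · filter_upwards [self_mem_nhdsWithin] with r hrpos
    rw [← Measure.addHaar_closedBall_eq_addHaar_ball volume x r]
    refine ENNReal.div_le_div_right (measure_mono ?_) _
    intro y hy
    exact ⟨ball_subset_closedBall hy.2, hy.1⟩

lemma approx_at_good [Nontrivial (Ec n)] {f : Ec n → Ec n} {S : Set (Ec n)} {g : Ec n → Ec n}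
    {x : Ec n} (hfg : EqOn f g S) (hxS : x ∈ S) (hdiff : DifferentiableAt ℝ g x)
    (hdens : Tendsto (fun r : ℝ => volume (Sᶜ ∩ ball x r) / volume (ball x r))
      (nhdsWithin 0 (Ioi 0)) (nhds 0)) :
    ApproxDiff1 f x (fderiv ℝ g x) := by
  intro ε hε
  set L := fderiv ℝ g x with hL
  have hlittle : ∀ᶠ y in nhds x, ‖g y - g x - L (y - x)‖ ≤ (ε/2) * ‖y - x‖ :=
    (hdiff.hasFDerivAt.isLittleO).bound (by positivity)
  rcases Metric.eventually_nhds_iff.1 hlittle with ⟨r₀, hr₀, hball⟩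
  set B := {y | y ≠ x ∧ ε * ‖y - x‖ ≤ ‖f y - f x - L (y - x)‖} with hB
  refine tendsto_of_tendsto_of_tendsto_of_le_of_le' tendsto_const_nhds hdens ?_ ?_
  · filter_upwards [self_mem_nhdsWithin] with r _; exact zero_le'
  · filter_upwards [Ioo_mem_nhdsGT_of_mem ⟨le_refl (0:ℝ), hr₀⟩] with r hr
    refine ENNReal.div_le_div_right (measure_mono ?_) _
    rintro y ⟨hyB, hyball⟩
    refine ⟨fun hyS => ?_, hyball⟩
    have hyx : y ≠ x := hyB.1
    have hylt : dist y x < r₀ := lt_of_lt_of_le (mem_ball.1 hyball) hr.2.le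
    have hbnd := hball hylt
    rw [← hfg hyS, ← hfg hxS] at hbnd
    have hpos : 0 < ‖y - x‖ := by
      rw [norm_pos_iff, sub_ne_zero]; exact hyx
    have := hyB.2
    nlinarith [this, hbnd]

lemma extend_lip {S : Set (Ec n)} {K : ℝ≥0} {f : Ec n → Ec n} (hf : LipschitzOnWith K f S) :
    ∃ g : Ec n → Ec n, (∃ K', LipschitzWith K' g) ∧ EqOn f g S := by
  set e : Ec n ≃L[ℝ] (Fin n → ℝ) := EuclideanSpace.equiv (Fin n) ℝ with he
  have h1 : LipschitzOnWith (‖(e : Ec n →L[ℝ] (Fin n → ℝ))‖₊ * K)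
      (fun x => e (f x)) S :=
    ((e : Ec n →L[ℝ] (Fin n → ℝ)).lipschitz).comp_lipschitzOnWith hf
  obtain ⟨g, hg, heq⟩ := h1.extend_pi
  refine ⟨fun x => e.symm (g x), ⟨_, ((e.symm : (Fin n → ℝ) →L[ℝ] Ec n).lipschitz).comp hg⟩, ?_⟩
  intro x hx
  show f x = e.symm (g x)
  rw [← heq hx]
  simp

end MS

theorem morse_sard_equidim {n : ℕ} (f : Ec n → Ec n) (hf : Measurable f)
    (N₀ : Set (Ec n)) (hN₀ : N₀.Countable)
    (h : ∀ x ∉ N₀, ∃ lam : ℝ,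
      apSmall x {y | y ≠ x ∧ lam * ‖y - x‖ ≤ ‖f y - f x‖}) :
    ∃ (D : Set (Ec n)) (F₁ : Ec n → (Ec n →L[ℝ] Ec n)),
      volume Dᶜ = 0 ∧
      (∀ x ∈ D, ApproxDiff1 f x (F₁ x)) ∧
      volume (f '' {x ∈ D | LinearMap.det ((F₁ x : Ec n →L[ℝ] Ec n) : Ec n →ₗ[ℝ] Ec n) = 0}) = 0 := by
  classical
  rcases Nat.eq_zero_or_pos n with hn | hn
  · subst hn
    refine ⟨Set.univ, fun _ => 0, by simp, ?_, ?_⟩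
    · intro x _ ε hε
      have hempty : {y : Ec 0 | y ≠ x ∧
          ε * ‖y - x‖ ≤ ‖f y - f x - (0 : Ec 0 →L[ℝ] Ec 0) (y - x)‖} = ∅ :=
        Set.eq_empty_iff_forall_notMem.2 (fun y hy => hy.1 (Subsingleton.elim y x))
      show Tendsto _ _ _
      simp only [hempty, Set.empty_inter, measure_empty, ENNReal.zero_div]
      exact tendsto_const_nhds
    · have hempty : {x ∈ (Set.univ : Set (Ec 0)) |
          LinearMap.det (((0 : Ec 0 →L[ℝ] Ec 0) : Ec 0 →L[ℝ] Ec 0) : Ec 0 →ₗ[ℝ] Ec 0) = 0} = ∅ := by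
        ext x
        have h01 : ((0 : Ec 0 →L[ℝ] Ec 0) : Ec 0 →ₗ[ℝ] Ec 0) = LinearMap.id :=
          Subsingleton.elim _ _
        simp [h01]
      rw [hempty]
      simp
  haveI : Nonempty (Fin n) := ⟨⟨0, hn⟩⟩
  haveI : Nontrivial (Ec n) := inferInstance
  obtain ⟨u, hu⟩ := TopologicalSpace.exists_dense_seq (Ec n)
  set kk : ℕ → ℕ := fun i => (Nat.unpair i).1 with hkk
  set S : ℕ → Set (Ec n) := fun i =>
    MS.Ek f (kk i) ∩ closedBall (u (Nat.unpair i).2) (1 / (8 * ((kk i : ℝ) + 1))) with hSdef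
  have hSmeas : ∀ i, MeasurableSet (S i) := fun i =>
    (MS.measurableSet_Ek f hf _).inter measurableSet_closedBall
  have hScover : ∀ x ∉ N₀, ∃ i, x ∈ S i := by
    intro x hx
    obtain ⟨lam, hlam⟩ := h x hx
    obtain ⟨k, hk⟩ := MS.coverage f hlam
    obtain ⟨j, hj⟩ := Metric.denseRange_iff.1 hu x (1 / (8 * ((k:ℝ)+1))) (by positivity)
    refine ⟨Nat.pair k j, ?_, ?_⟩
    · simpa [hSdef, hkk, Nat.unpair_pair] using hk
    · simp only [hSdef, hkk, Nat.unpair_pair, mem_closedBall]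
      exact hj.le
  have hLip : ∀ i, LipschitzOnWith (Real.toNNReal (5 * ((kk i : ℝ)+1))) f (S i) := by
    intro i
    apply LipschitzOnWith.of_dist_le_mul
    intro x hx y hy
    have hk1 : (0:ℝ) < (kk i:ℝ)+1 := by positivity
    have hdxy : dist x y < 1/(2*((kk i:ℝ)+1)) := by
      have h1 : dist x y ≤ dist x (u (Nat.unpair i).2) + dist (u (Nat.unpair i).2) y :=
        dist_triangle _ _ _
      have h2 : dist x (u (Nat.unpair i).2) ≤ 1 / (8 * ((kk i : ℝ) + 1)) := hx.2
      have h3 : dist (u (Nat.unpair i).2) y ≤ 1 / (8 * ((kk i : ℝ) + 1)) := by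
        rw [dist_comm]; exact hy.2
      have hlt : (2:ℝ) / (8 * ((kk i:ℝ)+1)) < 1/(2*((kk i:ℝ)+1)) := by
        rw [div_lt_div_iff₀ (by positivity) (by positivity)]
        nlinarith
      have hsum : (1:ℝ) / (8 * ((kk i:ℝ)+1)) + 1 / (8 * ((kk i:ℝ)+1))
          = 2 / (8 * ((kk i:ℝ)+1)) := by ring
      linarith
    have key := MS.lipschitz_Ek f (kk i) hx.1 hy.1 hdxy
    rw [dist_eq_norm, Real.coe_toNNReal _ (by positivity)]
    exact key
  choose g hgLip hgEq using fun i => MS.extend_lip (hLip i)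
  have hGood : ∀ i, ∃ G : Set (Ec n), G ⊆ S i ∧ volume (S i \ G) = 0 ∧
      ∀ x ∈ G, DifferentiableAt ℝ (g i) x ∧
        Tendsto (fun r : ℝ => volume ((S i)ᶜ ∩ ball x r) / volume (ball x r))
          (nhdsWithin 0 (Ioi 0)) (nhds 0) := by
    intro i
    obtain ⟨K', hK'⟩ := hgLip i
    have h1 : ∀ᵐ x ∂(volume : Measure (Ec n)), DifferentiableAt ℝ (g i) x :=
      hK'.ae_differentiableAt
    have h2 := Besicovitch.ae_tendsto_measure_inter_div_of_measurableSet volume (hSmeas i)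
    have h12 := h1.and h2
    refine ⟨S i ∩ {x | DifferentiableAt ℝ (g i) x ∧
      Tendsto (fun r => volume (S i ∩ closedBall x r) / volume (closedBall x r))
        (nhdsWithin 0 (Ioi 0)) (nhds ((S i).indicator 1 x))}, inter_subset_left, ?_, ?_⟩
    · refine measure_mono_null ?_ (ae_iff.1 h12)
      intro x hx
      exact fun hPx => hx.2 ⟨hx.1, hPx⟩
    · rintro x ⟨hxS, hPx⟩
      refine ⟨hPx.1, ?_⟩
      have hten := hPx.2
      rw [indicator_of_mem hxS] at hten
      exact MS.density_compl (hSmeas i) (by simpa using hten)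
  choose G hGsub hGnull hGprop using hGood
  set D := ⋃ i, G i with hD
  set idx : Ec n → ℕ := fun x => if hx : ∃ i, x ∈ G i then Nat.find hx else 0 with hidxdef
  have hidxmem : ∀ x ∈ D, x ∈ G (idx x) := by
    intro x hx
    obtain hex := mem_iUnion.1 hx
    simp only [hidxdef, dif_pos hex]
    exact Nat.find_spec hex
  set F₁ : Ec n → (Ec n →L[ℝ] Ec n) := fun x => fderiv ℝ (g (idx x)) x with hF₁
  refine ⟨D, F₁, ?_, ?_, ?_⟩
  · have hsub : Dᶜ ⊆ N₀ ∪ ⋃ i, (S i \ G i) := by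
      intro x hx
      by_cases hxN : x ∈ N₀
      · exact Or.inl hxN
      · obtain ⟨i, hi⟩ := hScover x hxN
        exact Or.inr (mem_iUnion.2 ⟨i, hi, fun hG => hx (mem_iUnion.2 ⟨i, hG⟩)⟩)
    refine measure_mono_null hsub (measure_union_null (hN₀.measure_zero _) ?_)
    exact measure_iUnion_null hGnull
  · intro x hxD
    obtain ⟨hdiff, hdens⟩ := hGprop (idx x) x (hidxmem x hxD)
    exact MS.approx_at_good (hgEq (idx x)) (hGsub (idx x) (hidxmem x hxD)) hdiff hdens
  · set T : ℕ → Set (Ec n) := fun i => {x | x ∈ G i ∧ idx x = i ∧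
      LinearMap.det ((F₁ x : Ec n →L[ℝ] Ec n) : Ec n →ₗ[ℝ] Ec n) = 0} with hT
    have hCT : {x ∈ D | LinearMap.det ((F₁ x : Ec n →L[ℝ] Ec n) : Ec n →ₗ[ℝ] Ec n) = 0}
        ⊆ ⋃ i, T i := by
      rintro x ⟨hxD, hdet⟩
      exact mem_iUnion.2 ⟨idx x, hidxmem x hxD, rfl, hdet⟩
    have himg : f '' {x ∈ D | LinearMap.det ((F₁ x : Ec n →L[ℝ] Ec n) : Ec n →ₗ[ℝ] Ec n) = 0}
        ⊆ ⋃ i, f '' (T i) := by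
      rw [← image_iUnion]
      exact image_mono hCT
    refine measure_mono_null himg (measure_iUnion_null ?_)
    intro i
    refine MeasureTheory.addHaar_image_eq_zero_of_det_fderivWithin_eq_zero volume
      (f' := F₁) ?_ ?_
    · rintro x ⟨hxG, hxidx, _⟩
      have hdiff : DifferentiableAt ℝ (g i) x := (hGprop i x hxG).1
      have hFx : F₁ x = fderiv ℝ (g i) x := by rw [hF₁]; simp only; rw [hxidx]
      have hder : HasFDerivWithinAt (g i) (F₁ x) (T i) x := by
        rw [hFx]; exact hdiff.hasFDerivAt.hasFDerivWithinAt
      refine hder.congr ?_ ?_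
      · rintro y ⟨hyG, _, _⟩
        exact hgEq i (hGsub i hyG)
      · exact hgEq i (hGsub i hxG)
    · rintro x ⟨_, _, hdet⟩
      exact hdet

end
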